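/- Let {K_n} be a finite family of incoherent 2×2 complex matrices with ∑_n K_n† K_n = I, let z, r be real numbers with z² + r² ≤ 1, and set σ = ∑_n K_n ρ(z,r) K_n†. Write z' = σ₀₀ − σ₁₁ and r' = 2|σ₀₁|. Then r'²·(1 − z²) ≤ r²·(1 − z'²). -/

import Mathlib

open Matrix

/-- A 2×2 complex matrix is incoherent if each of its columns has at most one
nonzero entry. -/
def Incoherent (K : Matrix (Fin 2) (Fin 2) ℂ) : Prop :=
  ∀ j i i' : Fin 2, K i j ≠ 0 → K i' j ≠ 0 → i = i'

/-- The qubit state `ρ(z,r) = (1/2) [[1+z, r], [r, 1-z]]`. -/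
noncomputable def qubit (z r : ℝ) : Matrix (Fin 2) (Fin 2) ℂ :=
  (1 / 2 : ℂ) • !![1 + (z : ℂ), (r : ℂ); (r : ℂ), 1 - (z : ℂ)]

private lemma entry_formula (M ρ : Matrix (Fin 2) (Fin 2) ℂ) (x y : Fin 2) :
    (M * ρ * Mᴴ) x y =
      M x 0 * ρ 0 0 * (starRingEnd ℂ) (M y 0) + M x 0 * ρ 0 1 * (starRingEnd ℂ) (M y 1) +
      M x 1 * ρ 1 0 * (starRingEnd ℂ) (M y 0) + M x 1 * ρ 1 1 * (starRingEnd ℂ) (M y 1) := by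
  simp [Matrix.mul_apply, Fin.sum_univ_two, Matrix.conjTranspose_apply]
  ring

private lemma qubit00 (z r : ℝ) : qubit z r 0 0 = (((1+z)/2 : ℝ) : ℂ) := by simp [qubit]; ring
private lemma qubit01 (z r : ℝ) : qubit z r 0 1 = ((r/2 : ℝ) : ℂ) := by simp [qubit]; ring
private lemma qubit10 (z r : ℝ) : qubit z r 1 0 = ((r/2 : ℝ) : ℂ) := by simp [qubit]; ring
private lemma qubit11 (z r : ℝ) : qubit z r 1 1 = (((1-z)/2 : ℝ) : ℂ) := by simp [qubit]; ring

/-- The output `(z', r')` of any incoherent operation applied to `ρ(z,r)` satisfies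
the ellipse constraint `r'²(1-z²) ≤ r²(1-z'²)`. -/
theorem io_output_in_ellipse (n : ℕ) (K : Fin n → Matrix (Fin 2) (Fin 2) ℂ)
    (hinc : ∀ i, Incoherent (K i)) (hsum : ∑ i, (K i)ᴴ * K i = 1)
    (z r : ℝ) (hzr : z ^ 2 + r ^ 2 ≤ 1) :
    (2 * ‖(∑ i, K i * qubit z r * (K i)ᴴ) 0 1‖) ^ 2 * (1 - z ^ 2) ≤
      r ^ 2 * (1 - (((∑ i, K i * qubit z r * (K i)ᴴ) 0 0).re
                    - ((∑ i, K i * qubit z r * (K i)ᴴ) 1 1).re) ^ 2) := by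
  classical
  set a : Fin n → ℂ := fun i => K i 0 0 with ha
  set b : Fin n → ℂ := fun i => K i 0 1 with hb
  set c : Fin n → ℂ := fun i => K i 1 0 with hc
  set d : Fin n → ℂ := fun i => K i 1 1 with hd
  -- incoherence
  have hac : ∀ i, a i = 0 ∨ c i = 0 := by
    intro i; by_contra h; push_neg at h
    exact absurd (hinc i 0 0 1 h.1 h.2) (by decide)
  have hbd : ∀ i, b i = 0 ∨ d i = 0 := by
    intro i; by_contra h; push_neg at h
    exact absurd (hinc i 1 0 1 h.1 h.2) (by decide)
  -- real parameters
  have hz1 : z ^ 2 ≤ 1 := by nlinarith [sq_nonneg r]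
  set p : ℝ := (1 + z) / 2 with hpdef
  set q : ℝ := (1 - z) / 2 with hqdef
  have hp : 0 ≤ p := by rw [hpdef]; nlinarith [sq_nonneg (z + 1)]
  have hq : 0 ≤ q := by rw [hqdef]; nlinarith [sq_nonneg (z - 1)]
  set s : ℝ := Real.sqrt (p * q) with hsdef
  have hs : 0 ≤ s := Real.sqrt_nonneg _
  have hs2 : s ^ 2 = p * q := Real.sq_sqrt (mul_nonneg hp hq)
  have h4pq : 1 - z ^ 2 = 4 * (p * q) := by rw [hpdef, hqdef]; ring
  have hrs : |r| ≤ 2 * s := by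
    have h1 : |r| ^ 2 ≤ (2 * s) ^ 2 := by
      rw [sq_abs]
      nlinarith [hs2, hzr, h4pq]
    nlinarith [abs_nonneg r, hs, h1]
  -- complex per-operator quantities
  set u : Fin n → ℂ := fun i => a i * (starRingEnd ℂ) (b i) with hu
  set v : Fin n → ℂ := fun i => c i * (starRingEnd ℂ) (d i) with hv
  set w : Fin n → ℂ := fun i => a i * (starRingEnd ℂ) (d i) + b i * (starRingEnd ℂ) (c i) with hw
  set W : Fin n → ℝ := fun i =>
    ‖a i‖ * ‖d i‖ + ‖b i‖ * ‖c i‖ with hW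
  set x : Fin n → ℝ := fun i =>
    p * ‖a i‖ ^ 2 + q * ‖b i‖ ^ 2 - 2 * s * ‖u i‖ with hx
  set y : Fin n → ℝ := fun i =>
    p * ‖c i‖ ^ 2 + q * ‖d i‖ ^ 2 - 2 * s * ‖v i‖ with hy
  clear_value a b c d p q s u v w W x y
  have habs_u : ∀ i, ‖u i‖ = ‖a i‖ * ‖b i‖ := by
    intro i; simp [hu, norm_mul, Complex.norm_conj]
  have habs_v : ∀ i, ‖v i‖ = ‖c i‖ * ‖d i‖ := by
    intro i; simp [hv, norm_mul, Complex.norm_conj]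
  have hsqp := Real.sq_sqrt hp
  have hsqq := Real.sq_sqrt hq
  have hseq : s = Real.sqrt p * Real.sqrt q := by rw [hsdef, Real.sqrt_mul hp]
  have hxsq : ∀ i, x i
      = (Real.sqrt p * ‖a i‖ - Real.sqrt q * ‖b i‖) ^ 2 := by
    intro i
    simp only [hx]
    rw [habs_u i, hseq]
    linear_combination (-(‖a i‖) ^ 2) * hsqp + (-(‖b i‖) ^ 2) * hsqq
  have hysq : ∀ i, y i
      = (Real.sqrt p * ‖c i‖ - Real.sqrt q * ‖d i‖) ^ 2 := by
    intro i
    simp only [hy]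
    rw [habs_v i, hseq]
    linear_combination (-(‖c i‖) ^ 2) * hsqp + (-(‖d i‖) ^ 2) * hsqq
  have hxnn : ∀ i, 0 ≤ x i := fun i => (hxsq i) ▸ sq_nonneg _
  have hynn : ∀ i, 0 ≤ y i := fun i => (hysq i) ▸ sq_nonneg _
  have hWnn : ∀ i, 0 ≤ W i := by
    intro i; simp only [hW]; positivity
  -- key per-operator inequality
  have hxy : ∀ i, p * q * W i ^ 2 ≤ x i * y i := by
    intro i
    rcases hac i with h | h <;> rcases hbd i with h' | h'
    · have hWi : W i = 0 := by simp [hW, h, h']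
      have hxi : x i = 0 := by simp [hx, hu, h, h']
      simp [hWi, hxi]
    · have hui : u i = 0 := by simp [hu, h]
      have hvi : v i = 0 := by simp [hv, h']
      have hWi : W i = ‖b i‖ * ‖c i‖ := by simp [hW, h, h']
      have hxi : x i = q * ‖b i‖ ^ 2 := by simp [hx, hui, h]
      have hyi : y i = p * ‖c i‖ ^ 2 := by simp [hy, hvi, h']
      rw [hWi, hxi, hyi]; exact le_of_eq (by ring)
    · have hui : u i = 0 := by simp [hu, h']
      have hvi : v i = 0 := by simp [hv, h]
      have hWi : W i = ‖a i‖ * ‖d i‖ := by simp [hW, h, h']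
      have hxi : x i = p * ‖a i‖ ^ 2 := by simp [hx, hui, h']
      have hyi : y i = q * ‖d i‖ ^ 2 := by simp [hy, hvi, h]
      rw [hWi, hxi, hyi]; exact le_of_eq (by ring)
    · have hvi : v i = 0 := by simp [hv, h]
      have hWi : W i = 0 := by simp [hW, h, h']
      have hyi : y i = 0 := by simp [hy, hvi, h, h']
      simp [hWi, hyi]
  -- normalization facts
  have key0 : ∀ j k : Fin 2,
      ∑ i, ((starRingEnd ℂ) (K i 0 j) * K i 0 k + (starRingEnd ℂ) (K i 1 j) * K i 1 k)
        = if j = k then 1 else 0 := by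
    intro j k
    have h := congrFun (congrFun hsum j) k
    simpa [Matrix.sum_apply, Matrix.mul_apply, Fin.sum_univ_two, Matrix.conjTranspose_apply,
      Matrix.one_apply] using h
  have hN0 : ∑ i, (‖a i‖ ^ 2 + ‖c i‖ ^ 2) = 1 := by
    have h0 := key0 0 0
    rw [if_pos rfl] at h0
    have h := congrArg Complex.re h0
    rw [Complex.re_sum] at h
    simp only [Complex.one_re] at h
    rw [← h]
    apply Finset.sum_congr rfl
    intro i _
    simp only [ha, hc]
    simp [Complex.add_re, Complex.mul_re, Complex.conj_re, Complex.conj_im, Complex.sq_norm,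
      Complex.normSq_apply]
  have hN1 : ∑ i, (‖b i‖ ^ 2 + ‖d i‖ ^ 2) = 1 := by
    have h0 := key0 1 1
    rw [if_pos rfl] at h0
    have h := congrArg Complex.re h0
    rw [Complex.re_sum] at h
    simp only [Complex.one_re] at h
    rw [← h]
    apply Finset.sum_congr rfl
    intro i _
    simp only [hb, hd]
    simp [Complex.add_re, Complex.mul_re, Complex.conj_re, Complex.conj_im, Complex.sq_norm,
      Complex.normSq_apply]
  have huv : ∑ i, (u i + v i) = 0 := by
    have h0 := key0 0 1
    rw [if_neg (by decide)] at h0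
    have h := congrArg (starRingEnd ℂ) h0
    simp only [map_sum, map_add, _root_.map_mul, Complex.conj_conj, map_zero] at h
    rw [← h]
    apply Finset.sum_congr rfl
    intro i _
    simp only [hu, hv, ha, hb, hc, hd]
  have hv_sum : (∑ i, v i) = -(∑ i, u i) := by
    rw [Finset.sum_add_distrib] at huv
    linear_combination huv
  -- matrix entries of the output
  have hρ00 := qubit00 z r
  have hρ01 := qubit01 z r
  have hρ10 := qubit10 z r
  have hρ11 := qubit11 z r
  have hσ01 : (∑ i, K i * qubit z r * (K i)ᴴ) 0 1 = ((r/2 : ℝ) : ℂ) * ∑ i, w i := by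
    rw [Matrix.sum_apply, Finset.mul_sum]
    apply Finset.sum_congr rfl
    intro i _
    rw [entry_formula, hρ00, hρ01, hρ10, hρ11]
    have h1 : a i * (starRingEnd ℂ) (c i) = 0 := by rcases hac i with h | h <;> simp [h]
    have h2 : b i * (starRingEnd ℂ) (d i) = 0 := by rcases hbd i with h | h <;> simp [h]
    simp only [hw, ha, hb, hc, hd] at h1 h2 ⊢
    linear_combination (((1+z)/2 : ℝ) : ℂ) * h1 + (((1-z)/2 : ℝ) : ℂ) * h2
  have hσ00 : ((∑ i, K i * qubit z r * (K i)ᴴ) 0 0).re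
      = (∑ i, (p * ‖a i‖ ^ 2 + q * ‖b i‖ ^ 2)) + r * (∑ i, u i).re := by
    rw [Matrix.sum_apply, Complex.re_sum, Complex.re_sum, Finset.mul_sum,
      ← Finset.sum_add_distrib]
    apply Finset.sum_congr rfl
    intro i _
    rw [entry_formula, hρ00, hρ01, hρ10, hρ11]
    simp only [hu, ha, hb, hpdef, hqdef]
    simp [Complex.add_re, Complex.mul_re, Complex.mul_im, Complex.ofReal_re, Complex.ofReal_im,
      Complex.conj_re, Complex.conj_im, Complex.sq_norm, Complex.normSq_apply]
    ring
  have hσ11 : ((∑ i, K i * qubit z r * (K i)ᴴ) 1 1).re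
      = (∑ i, (p * ‖c i‖ ^ 2 + q * ‖d i‖ ^ 2)) + r * (∑ i, v i).re := by
    rw [Matrix.sum_apply, Complex.re_sum, Complex.re_sum, Finset.mul_sum,
      ← Finset.sum_add_distrib]
    apply Finset.sum_congr rfl
    intro i _
    rw [entry_formula, hρ00, hρ01, hρ10, hρ11]
    simp only [hv, hc, hd, hpdef, hqdef]
    simp [Complex.add_re, Complex.mul_re, Complex.mul_im, Complex.ofReal_re, Complex.ofReal_im,
      Complex.conj_re, Complex.conj_im, Complex.sq_norm, Complex.normSq_apply]
    ring
  -- global quantities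
  set X : ℝ := ∑ i, (p * ‖a i‖ ^ 2 + q * ‖b i‖ ^ 2) with hX
  set Y : ℝ := ∑ i, (p * ‖c i‖ ^ 2 + q * ‖d i‖ ^ 2) with hY
  set cR : ℝ := r * (∑ i, u i).re with hcR
  set Sx : ℝ := ∑ i, x i with hSx
  set Sy : ℝ := ∑ i, y i with hSy
  set SW : ℝ := ∑ i, W i with hSW
  clear_value X Y cR Sx Sy SW
  have hXY : X + Y = 1 := by
    have hsplit : X + Y = p * (∑ i, (‖a i‖ ^ 2 + ‖c i‖ ^ 2))
        + q * (∑ i, (‖b i‖ ^ 2 + ‖d i‖ ^ 2)) := by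
      rw [hX, hY, Finset.mul_sum, Finset.mul_sum, ← Finset.sum_add_distrib,
        ← Finset.sum_add_distrib]
      apply Finset.sum_congr rfl
      intro i _; ring
    rw [hsplit, hN0, hN1, hpdef, hqdef]; ring
  have hzp : ((∑ i, K i * qubit z r * (K i)ᴴ) 0 0).re
      - ((∑ i, K i * qubit z r * (K i)ᴴ) 1 1).re = 2 * (X + cR) - 1 := by
    rw [hσ00, hσ11, hv_sum]
    simp only [Complex.neg_re, mul_neg, ← hcR]
    linarith [hXY]
  -- bounds on the sums
  have hsum_u_abs : ‖∑ i, u i‖ ≤ ∑ i, ‖u i‖ :=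
    norm_sum_le _ _
  have hsum_v_abs : ‖∑ i, v i‖ ≤ ∑ i, ‖v i‖ :=
    norm_sum_le _ _
  have habs_uv : ‖∑ i, u i‖ = ‖∑ i, v i‖ := by
    rw [hv_sum, norm_neg]
  have habs_cR : |cR| ≤ 2 * s * ‖∑ i, u i‖ := by
    rw [hcR, abs_mul]
    exact mul_le_mul hrs (Complex.abs_re_le_norm _) (abs_nonneg _) (by positivity)
  have hSxX : Sx ≤ X + cR := by
    have hXS : X - Sx = 2 * s * ∑ i, ‖u i‖ := by
      rw [hX, hSx, ← Finset.sum_sub_distrib, Finset.mul_sum]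
      apply Finset.sum_congr rfl
      intro i _
      simp only [hx]; ring
    have h1 : |cR| ≤ 2 * s * ∑ i, ‖u i‖ :=
      le_trans habs_cR (mul_le_mul_of_nonneg_left hsum_u_abs (by positivity))
    have h2 := neg_abs_le cR
    linarith
  have hSyY : Sy ≤ Y - cR := by
    have hYS : Y - Sy = 2 * s * ∑ i, ‖v i‖ := by
      rw [hY, hSy, ← Finset.sum_sub_distrib, Finset.mul_sum]
      apply Finset.sum_congr rfl
      intro i _
      simp only [hy]; ring
    have h1 : |cR| ≤ 2 * s * ∑ i, ‖v i‖ := by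
      calc |cR| ≤ 2 * s * ‖∑ i, u i‖ := habs_cR
        _ = 2 * s * ‖∑ i, v i‖ := by rw [habs_uv]
        _ ≤ 2 * s * ∑ i, ‖v i‖ :=
            mul_le_mul_of_nonneg_left hsum_v_abs (by positivity)
    have h2 := le_abs_self cR
    linarith
  -- Cauchy-Schwarz
  have hCS : p * q * SW ^ 2 ≤ Sx * Sy := by
    have h1 : ∀ i ∈ Finset.univ, s * W i ≤ Real.sqrt (x i) * Real.sqrt (y i) := by
      intro i _
      have h2 : Real.sqrt (p * q * W i ^ 2) ≤ Real.sqrt (x i * y i) := Real.sqrt_le_sqrt (hxy i)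
      rw [Real.sqrt_mul (mul_nonneg hp hq), Real.sqrt_sq (hWnn i), ← hsdef] at h2
      rwa [Real.sqrt_mul (hxnn i)] at h2
    have h3 : s * SW ≤ ∑ i, Real.sqrt (x i) * Real.sqrt (y i) := by
      rw [hSW, Finset.mul_sum]
      exact Finset.sum_le_sum h1
    have h4 := Finset.sum_mul_sq_le_sq_mul_sq Finset.univ
      (fun i => Real.sqrt (x i)) (fun i => Real.sqrt (y i))
    have h5 : ∑ i, Real.sqrt (x i) ^ 2 = Sx := by
      rw [hSx]; exact Finset.sum_congr rfl fun i _ => Real.sq_sqrt (hxnn i)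
    have h6 : ∑ i, Real.sqrt (y i) ^ 2 = Sy := by
      rw [hSy]; exact Finset.sum_congr rfl fun i _ => Real.sq_sqrt (hynn i)
    rw [h5, h6] at h4
    have h7 : (s * SW) ^ 2 ≤ (∑ i, Real.sqrt (x i) * Real.sqrt (y i)) ^ 2 := by
      have hSWnn : 0 ≤ SW := by rw [hSW]; exact Finset.sum_nonneg fun i _ => hWnn i
      exact pow_le_pow_left₀ (by positivity) h3 2
    calc p * q * SW ^ 2 = (s * SW) ^ 2 := by rw [mul_pow, hs2]
      _ ≤ _ := le_trans h7 h4
  -- bound on the off-diagonal entry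
  have habs01 : 2 * ‖(∑ i, K i * qubit z r * (K i)ᴴ) 0 1‖ ≤ |r| * SW := by
    rw [hσ01, norm_mul]
    have h1 : ‖((r/2 : ℝ) : ℂ)‖ = |r| / 2 := by
      rw [Complex.norm_real, Real.norm_eq_abs, abs_div]; norm_num
    rw [h1]
    have h2 : ‖∑ i, w i‖ ≤ SW := by
      refine le_trans (norm_sum_le _ _) ?_
      rw [hSW]
      apply Finset.sum_le_sum
      intro i _
      simp only [hw, hW]
      refine le_trans (norm_add_le _ _) ?_
      simp [norm_mul, Complex.norm_conj]
    calc 2 * (|r| / 2 * ‖∑ i, w i‖) = |r| * ‖∑ i, w i‖ := by ring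
      _ ≤ |r| * SW := mul_le_mul_of_nonneg_left h2 (abs_nonneg r)
  -- final assembly
  rw [hzp]
  have hSxnn : 0 ≤ Sx := by rw [hSx]; exact Finset.sum_nonneg fun i _ => hxnn i
  have hSynn : 0 ≤ Sy := by rw [hSy]; exact Finset.sum_nonneg fun i _ => hynn i
  have hXcnn : 0 ≤ X + cR := le_trans hSxnn hSxX
  have hprod : Sx * Sy ≤ (X + cR) * (Y - cR) := mul_le_mul hSxX hSyY hSynn hXcnn
  have hSWnn : 0 ≤ SW := by rw [hSW]; exact Finset.sum_nonneg fun i _ => hWnn i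
  have hstep1 : (2 * ‖(∑ i, K i * qubit z r * (K i)ᴴ) 0 1‖) ^ 2
      ≤ (|r| * SW) ^ 2 :=
    pow_le_pow_left₀ (by positivity) habs01 2
  have h1z : 0 ≤ 1 - z ^ 2 := by linarith
  calc (2 * ‖(∑ i, K i * qubit z r * (K i)ᴴ) 0 1‖) ^ 2 * (1 - z ^ 2)
      ≤ (|r| * SW) ^ 2 * (1 - z ^ 2) := mul_le_mul_of_nonneg_right hstep1 h1z
    _ = 4 * r ^ 2 * (p * q * SW ^ 2) := by rw [h4pq, mul_pow, sq_abs]; ring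
    _ ≤ 4 * r ^ 2 * (Sx * Sy) := mul_le_mul_of_nonneg_left hCS (by positivity)
    _ ≤ 4 * r ^ 2 * ((X + cR) * (Y - cR)) := mul_le_mul_of_nonneg_left hprod (by positivity)
    _ = r ^ 2 * (1 - (2 * (X + cR) - 1) ^ 2) := by
        linear_combination (4 * r ^ 2 * (X + cR)) * hXY
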